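/- Let C and D be bounded operators on a Hilbert space such that the product C·D is selfadjoint. Then ‖C·D‖ ≤ ‖D·C‖. -/

import Mathlib

lemma spectralRadius_mul_comm {A : Type*} [NormedRing A] [NormedAlgebra ℂ A] (a b : A) :
    spectralRadius ℂ (a * b) = spectralRadius ℂ (b * a) := by
  have key : ∀ x y : A, spectralRadius ℂ (x * y) ≤ spectralRadius ℂ (y * x) := by
    intro x y
    rw [spectralRadius, spectralRadius]
    refine iSup₂_le fun k hk => ?_
    rcases eq_or_ne k 0 with rfl | hk0
    · simp
    · have : k ∈ spectrum ℂ (y * x) \ {0} := by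
        rw [← spectrum.nonzero_mul_comm]
        exact ⟨hk, hk0⟩
      exact le_iSup₂ (f := fun k (_ : k ∈ spectrum ℂ (y * x)) => (‖k‖₊ : ENNReal)) k this.1
  exact le_antisymm (key a b) (key b a)

/-- If the product `C·D` of bounded operators is selfadjoint, then `‖C·D‖ ≤ ‖D·C‖`. -/
theorem statement5 {H : Type*} [NormedAddCommGroup H] [InnerProductSpace ℂ H]
    [CompleteSpace H] (C D : H →L[ℂ] H) (h : IsSelfAdjoint (C.comp D)) :
    ‖C.comp D‖ ≤ ‖D.comp C‖ := by
  cases subsingleton_or_nontrivial H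
  · simp [Subsingleton.elim (C.comp D) 0, Subsingleton.elim (D.comp C) 0]
  have h1 : spectralRadius ℂ (C * D) = ‖C * D‖₊ := h.spectralRadius_eq_nnnorm
  have h2 : spectralRadius ℂ (D * C) ≤ ‖D * C‖₊ := spectrum.spectralRadius_le_nnnorm (𝕜 := ℂ) _
  have h3 := spectralRadius_mul_comm C D
  have : (‖C * D‖₊ : ENNReal) ≤ ‖D * C‖₊ := by rw [← h1, h3]; exact h2
  have := ENNReal.coe_le_coe.mp this
  exact_mod_cast this
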